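/- Let n ≥ 1 be an integer and let T₀ = conv{ρ₀, ρ_u, ρ_v} and T₁ = conv{ρ₁, ρ_u, ρ_v} be two adjacent A_n-triangles in ℤ³, and let w₀, w₁ ∈ Hom(ℤ³, ℤ) be the unique linear forms taking the value 1 on the vertices of T₀ and of T₁ respectively. Then ⟨w₁, ρ₀⟩ = ⟨w₀, ρ₁⟩. In particular, the condition of almost-flatness is symmetric in T₀ and T₁. -/

import Mathlib

open Matrix

/-- The coordinatewise embedding `ℤ³ → ℝ³`. -/
def toR3 (v : Fin 3 → ℤ) : Fin 3 → ℝ := fun i => (v i : ℝ)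

/-- The lattice length of the segment between two lattice points `p, q ∈ ℤ³`:
the gcd of the coordinates of `q − p`. -/
def latticeLength (p q : Fin 3 → ℤ) : ℕ :=
  Int.gcd (q 0 - p 0) ((Int.gcd (q 1 - p 1) (q 2 - p 2) : ℕ) : ℤ)

/-- The relative interior of the triangle with vertices `a, b, c ∈ ℝ³`: points with all
barycentric coordinates (strictly) positive. -/
def relIntTriangle (a b c : Fin 3 → ℝ) : Set (Fin 3 → ℝ) :=
  {x | ∃ t₁ t₂ t₃ : ℝ, 0 < t₁ ∧ 0 < t₂ ∧ 0 < t₃ ∧ t₁ + t₂ + t₃ = 1 ∧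
    x = t₁ • a + t₂ • b + t₃ • c}

/-- An `Aₙ`-triangle in `ℤ³`: three affinely independent lattice points such that (1) the
relative interior of their convex hull contains no lattice point, (2) the edges have lattice
lengths `1`, `1`, `n+1`, (3) some linear form `w ∈ Hom(ℤ³, ℤ)` takes the value `1` on all
three vertices. -/
structure IsAnTriangle (n : ℕ) (v₁ v₂ v₃ : Fin 3 → ℤ) : Prop where
  affInd : AffineIndependent ℝ ![toR3 v₁, toR3 v₂, toR3 v₃]
  no_interior_point : ∀ p : Fin 3 → ℤ, toR3 p ∉ relIntTriangle (toR3 v₁) (toR3 v₂) (toR3 v₃)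
  edge_lengths : ({latticeLength v₁ v₂, latticeLength v₂ v₃, latticeLength v₁ v₃} : Multiset ℕ)
    = {1, 1, n + 1}
  height_one : ∃ w : Fin 3 → ℤ, w ⬝ᵥ v₁ = 1 ∧ w ⬝ᵥ v₂ = 1 ∧ w ⬝ᵥ v₃ = 1

/-- Two adjacent `Aₙ`-triangles `T₀ = conv{ρ₀, ρᵤ, ρᵥ}` and `T₁ = conv{ρ₁, ρᵤ, ρᵥ}` in `ℤ³`:
both are `Aₙ`-triangles, the common edge `conv{ρᵤ, ρᵥ}` is the edge of lattice length `n+1`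
of both, and `ρ₀`, `ρ₁` lie in the two different open half-spaces of `ℝ³` determined by the
plane spanned by `ρᵤ` and `ρᵥ`. -/
structure AreAdjacentAnTriangles (n : ℕ) (ρ₀ ρ₁ ρu ρv : Fin 3 → ℤ) : Prop where
  t₀ : IsAnTriangle n ρ₀ ρu ρv
  t₁ : IsAnTriangle n ρ₁ ρu ρv
  common_edge_length : latticeLength ρu ρv = n + 1
  opposite_sides : ∃ φ : (Fin 3 → ℝ) →ₗ[ℝ] ℝ,
    φ (toR3 ρu) = 0 ∧ φ (toR3 ρv) = 0 ∧ φ (toR3 ρ₀) < 0 ∧ 0 < φ (toR3 ρ₁)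

/-- For two adjacent `Aₙ`-triangles with supporting linear forms `w₀`, `w₁`
(taking the value `1` on the vertices of `T₀`, resp. `T₁`), one has
`⟨w₁, ρ₀⟩ = ⟨w₀, ρ₁⟩`; in particular almost-flatness is symmetric. -/
private def det3 (a b c : Fin 3 → ℤ) : ℤ :=
  a 0 * (b 1 * c 2 - b 2 * c 1) - a 1 * (b 0 * c 2 - b 2 * c 0) + a 2 * (b 0 * c 1 - b 1 * c 0)

private lemma cramer3 (u e r x : Fin 3 → ℤ) (j : Fin 3) :
    det3 u e r * x j = det3 x e r * u j + det3 u x r * e j + det3 u e x * r j := by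
  fin_cases j <;> simp only [det3, Fin.zero_eta, Fin.mk_one, Fin.reduceFinMk] <;> ring

private lemma det3_combo (u e r : Fin 3 → ℤ) (a₀ b₀ c₀ a₁ b₁ c₁ a₂ b₂ c₂ : ℤ) :
    det3 (fun j => a₀ * u j + b₀ * e j + c₀ * r j) (fun j => a₁ * u j + b₁ * e j + c₁ * r j)
      (fun j => a₂ * u j + b₂ * e j + c₂ * r j)
      = (a₀ * (b₁ * c₂ - c₁ * b₂) - b₀ * (a₁ * c₂ - c₁ * a₂) + c₀ * (a₁ * b₂ - b₁ * a₂))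
        * det3 u e r := by
  simp only [det3]; ring

private lemma bezout3 (a b c : ℤ) :
    ∃ x y z : ℤ, x * a + y * b + z * c = (Int.gcd a (Int.gcd b c : ℤ) : ℤ) := by
  refine ⟨Int.gcdA a (Int.gcd b c : ℤ),
    Int.gcdB a (Int.gcd b c : ℤ) * Int.gcdA b c,
    Int.gcdB a (Int.gcd b c : ℤ) * Int.gcdB b c, ?_⟩
  have h1 := Int.gcd_eq_gcd_ab a (Int.gcd b c : ℤ)
  have h2 := Int.gcd_eq_gcd_ab b c
  linear_combination -h1 - Int.gcdB a (Int.gcd b c : ℤ) * h2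

private lemma no_fract_multiple (v : Fin 3 → ℤ)
    (hg : Int.gcd (v 0) (Int.gcd (v 1) (v 2) : ℤ) = 1)
    (t : ℚ) (h0 : 0 < t) (h1 : t < 1) (z : Fin 3 → ℤ)
    (hz : ∀ j, (z j : ℚ) = t * v j) : False := by
  obtain ⟨x, y, w, hb⟩ := bezout3 (v 0) (v 1) (v 2)
  rw [hg] at hb
  have hb' : ((x : ℚ)) * v 0 + y * v 1 + w * v 2 = 1 := by
    exact_mod_cast congrArg (Int.cast : ℤ → ℚ) hb
  have ht : t = ((x * z 0 + y * z 1 + w * z 2 : ℤ) : ℚ) := by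
    push_cast
    rw [hz 0, hz 1, hz 2]
    linear_combination -t * hb'
  rw [ht] at h0 h1
  have h0' : (0 : ℤ) < x * z 0 + y * z 1 + w * z 2 := by exact_mod_cast h0
  have h1' : (x * z 0 + y * z 1 + w * z 2 : ℤ) < 1 := by exact_mod_cast h1
  omega

private lemma edge_a_eq_one {a c n : ℕ} (hn : 1 ≤ n)
    (h : ({a, n + 1, c} : Multiset ℕ) = {1, 1, n + 1}) : a = 1 := by
  have ha : a ∈ ({1, 1, n + 1} : Multiset ℕ) := by rw [← h]; simp
  simp only [Multiset.insert_eq_cons, Multiset.mem_cons, Multiset.mem_singleton] at ha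
  rcases ha with h1 | h1 | h1
  · exact h1
  · exact h1
  · exfalso
    subst h1
    have hne : n + 1 ≠ 1 := by omega
    have hc := congrArg (Multiset.count (n + 1)) h
    simp only [Multiset.insert_eq_cons, Multiset.count_cons, Multiset.count_singleton] at hc
    split_ifs at hc <;> omega

private lemma key_det (n : ℕ) (hn : 1 ≤ n) (ρ₀ ρu ρv e : Fin 3 → ℤ)
    (ht : IsAnTriangle n ρ₀ ρu ρv)
    (huv : latticeLength ρu ρv = n + 1)
    (he : ∀ j, ρv j - ρu j = ((n : ℤ) + 1) * e j)
    (hge : Int.gcd (e 0) (Int.gcd (e 1) (e 2) : ℤ) = 1) :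
    det3 ρu e ρ₀ = 1 ∨ det3 ρu e ρ₀ = -1 := by
  obtain ⟨w, hw1, hw2, hw3⟩ := ht.height_one
  simp only [dotProduct, Fin.sum_univ_three] at hw1 hw2 hw3
  have hnZ : ((n : ℤ) + 1) ≠ 0 := by positivity
  -- w ⬝ e = 0
  have hwe : w 0 * e 0 + w 1 * e 1 + w 2 * e 2 = 0 := by
    have hh : ((n : ℤ) + 1) * (w 0 * e 0 + w 1 * e 1 + w 2 * e 2) = 0 := by
      linear_combination (-(w 0)) * he 0 - w 1 * he 1 - w 2 * he 2 + hw3 - hw2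
    exact (mul_eq_zero.mp hh).resolve_left hnZ
  -- the edge ρ₀ρu is primitive
  have h01 : latticeLength ρ₀ ρu = 1 := by
    have hel := ht.edge_lengths
    rw [huv] at hel
    exact edge_a_eq_one hn hel
  obtain ⟨f, hfj⟩ : ∃ f : Fin 3 → ℤ, ∀ j, f j = ρ₀ j - ρu j := ⟨_, fun _ => rfl⟩
  have hgf : Int.gcd (f 0) (Int.gcd (f 1) (f 2) : ℤ) = 1 := by
    unfold latticeLength at h01
    simp only [Int.gcd_def, Int.natAbs_natCast] at h01 ⊢
    have habs : ∀ a b : ℤ, (a - b).natAbs = (b - a).natAbs := fun a b => by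
      rw [← Int.natAbs_neg (a - b), neg_sub]
    rw [hfj 0, hfj 1, hfj 2, habs (ρ₀ 0), habs (ρ₀ 1), habs (ρ₀ 2)]
    exact h01
  -- the determinant is nonzero
  have hK0 : det3 ρu e ρ₀ ≠ 0 := by
    intro h0
    have hcast : (ρu 0 : ℝ) * ((e 1 : ℝ) * (ρ₀ 2 : ℝ) - (e 2 : ℝ) * (ρ₀ 1 : ℝ))
        - (ρu 1 : ℝ) * ((e 0 : ℝ) * (ρ₀ 2 : ℝ) - (e 2 : ℝ) * (ρ₀ 0 : ℝ))
        + (ρu 2 : ℝ) * ((e 0 : ℝ) * (ρ₀ 1 : ℝ) - (e 1 : ℝ) * (ρ₀ 0 : ℝ)) = 0 := by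
      have := congrArg (Int.cast : ℤ → ℝ) h0
      push_cast [det3] at this
      linarith [this]
    have hdet : (Matrix.of ![toR3 ρu, toR3 e, toR3 ρ₀]).det = 0 := by
      rw [Matrix.det_fin_three]
      simp only [Matrix.of_apply, Matrix.cons_val', Matrix.cons_val_zero, Matrix.cons_val_one,
        Matrix.head_cons, Matrix.cons_val_two, Matrix.tail_cons, Matrix.empty_val',
        Matrix.cons_val_fin_one, Matrix.head_fin_const, toR3]
      linarith [hcast]
    obtain ⟨v, hv, hvM⟩ := (Matrix.exists_vecMul_eq_zero_iff).mpr hdet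
    have hE : ∀ j : Fin 3, v 0 * (ρu j : ℝ) + v 1 * (e j : ℝ) + v 2 * (ρ₀ j : ℝ) = 0 := by
      intro j
      have h := congrFun hvM j
      simp only [Matrix.vecMul, dotProduct, Fin.sum_univ_three, Matrix.of_apply,
        Matrix.cons_val', Matrix.cons_val_zero, Matrix.cons_val_one, Matrix.head_cons,
        Matrix.cons_val_two, Matrix.tail_cons, Matrix.empty_val', Matrix.cons_val_fin_one,
        Matrix.head_fin_const, toR3, Pi.zero_apply] at h
      linarith [h]
    have hw2R : (w 0 : ℝ) * (ρu 0 : ℝ) + (w 1 : ℝ) * (ρu 1 : ℝ) + (w 2 : ℝ) * (ρu 2 : ℝ) = 1 := by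
      exact_mod_cast hw2
    have hw1R : (w 0 : ℝ) * (ρ₀ 0 : ℝ) + (w 1 : ℝ) * (ρ₀ 1 : ℝ) + (w 2 : ℝ) * (ρ₀ 2 : ℝ) = 1 := by
      exact_mod_cast hw1
    have hweR : (w 0 : ℝ) * (e 0 : ℝ) + (w 1 : ℝ) * (e 1 : ℝ) + (w 2 : ℝ) * (e 2 : ℝ) = 0 := by
      exact_mod_cast hwe
    have heR : ∀ j, ((ρv j : ℝ) - (ρu j : ℝ)) = ((n : ℝ) + 1) * (e j : ℝ) := by
      intro j; exact_mod_cast he j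
    have hv02 : v 0 + v 2 = 0 := by
      linear_combination (w 0 : ℝ) * hE 0 + (w 1 : ℝ) * hE 1 + (w 2 : ℝ) * hE 2
        - v 0 * hw2R - v 1 * hweR - v 2 * hw1R
    have hnR : ((n : ℝ) + 1) ≠ 0 := by positivity
    have hsum : ∑ i, (![-(v 0) * ((n : ℝ) + 1), v 0 * ((n : ℝ) + 1) - v 1, v 1]) i = 0 := by
      simp [Fin.sum_univ_three]; ring
    have hcomb : ∑ i, (![-(v 0) * ((n : ℝ) + 1), v 0 * ((n : ℝ) + 1) - v 1, v 1]) i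
        • (![toR3 ρ₀, toR3 ρu, toR3 ρv]) i = 0 := by
      simp only [Fin.sum_univ_three, Matrix.cons_val_zero, Matrix.cons_val_one, Matrix.head_cons,
        Matrix.cons_val_two, Matrix.tail_cons]
      funext j
      simp only [Pi.add_apply, Pi.smul_apply, smul_eq_mul, Pi.zero_apply, toR3]
      linear_combination ((n : ℝ) + 1) * hE j + v 1 * heR j - ((n : ℝ) + 1) * (ρ₀ j : ℝ) * hv02
    have hz := affineIndependent_iff.mp ht.affInd Finset.univ _ hsum hcomb
    have hv0 : v 0 = 0 := by
      have h' := hz 0 (Finset.mem_univ _)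
      simp only [Matrix.cons_val_zero, neg_mul, neg_eq_zero, mul_eq_zero] at h'
      rcases h' with h' | h'
      · exact h'
      · exact absurd h' hnR
    have hv1 : v 1 = 0 := by
      have h' := hz 2 (Finset.mem_univ _)
      simpa using h'
    apply hv
    funext i
    fin_cases i
    · exact hv0
    · exact hv1
    · simpa [hv0] using hv02
  -- every lattice point is an integer combination of ρu, e, ρ₀
  have claim : ∀ z : Fin 3 → ℤ, ∃ a b c : ℤ, ∀ j, z j = a * ρu j + b * e j + c * ρ₀ j := by
    intro z
    obtain ⟨s, hs⟩ : ∃ s : ℤ, s = w 0 * z 0 + w 1 * z 1 + w 2 * z 2 := ⟨_, rfl⟩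
    obtain ⟨z', hz'j⟩ : ∃ z' : Fin 3 → ℤ, ∀ j, z' j = z j - s * ρu j := ⟨_, fun _ => rfl⟩
    have hKf : det3 ρu e f = det3 ρu e ρ₀ := by simp only [det3, hfj]; ring
    have hcr : ∀ j, det3 ρu e ρ₀ * z' j
        = det3 z' e f * ρu j + det3 ρu z' f * e j + det3 ρu e z' * f j := by
      intro j; rw [← hKf]; exact cramer3 ρu e f z' j
    have hwz' : w 0 * z' 0 + w 1 * z' 1 + w 2 * z' 2 = 0 := by
      simp only [hz'j]; linear_combination (-s) * hw2 - hs
    have hwf : w 0 * f 0 + w 1 * f 1 + w 2 * f 2 = 0 := by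
      simp only [hfj]; linear_combination hw1 - hw2
    have hD1 : det3 z' e f = 0 := by
      linear_combination (-(w 0)) * hcr 0 - w 1 * hcr 1 - w 2 * hcr 2
        + det3 ρu e ρ₀ * hwz' - det3 z' e f * hw2 - det3 ρu z' f * hwe - det3 ρu e z' * hwf
    have hKQ : ((det3 ρu e ρ₀ : ℤ) : ℚ) ≠ 0 := Int.cast_ne_zero.mpr hK0
    have hzq : ∀ j, (z' j : ℚ) = ((det3 ρu z' f : ℤ) / (det3 ρu e ρ₀ : ℤ)) * e j
        + ((det3 ρu e z' : ℤ) / (det3 ρu e ρ₀ : ℤ)) * f j := by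
      intro j
      have hZ : det3 ρu e ρ₀ * z' j = det3 ρu z' f * e j + det3 ρu e z' * f j := by
        linear_combination hcr j + ρu j * hD1
      have hQ : (det3 ρu e ρ₀ : ℚ) * (z' j : ℚ)
          = (det3 ρu z' f : ℚ) * (e j : ℚ) + (det3 ρu e z' : ℚ) * (f j : ℚ) := by
        exact_mod_cast congrArg (Int.cast : ℤ → ℚ) hZ
      field_simp
      linear_combination hQ
    obtain ⟨m2, hm2⟩ : ∃ m2 : ℤ, m2 = ⌊((det3 ρu z' f : ℤ) : ℚ) / (det3 ρu e ρ₀ : ℤ)⌋ := ⟨_, rfl⟩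
    obtain ⟨m3, hm3⟩ : ∃ m3 : ℤ, m3 = ⌊((det3 ρu e z' : ℤ) : ℚ) / (det3 ρu e ρ₀ : ℤ)⌋ := ⟨_, rfl⟩
    obtain ⟨b0, hb0⟩ : ∃ b0 : ℚ, b0 = Int.fract (((det3 ρu z' f : ℤ) : ℚ) / (det3 ρu e ρ₀ : ℤ)) := ⟨_, rfl⟩
    obtain ⟨g0, hg0⟩ : ∃ g0 : ℚ, g0 = Int.fract (((det3 ρu e z' : ℤ) : ℚ) / (det3 ρu e ρ₀ : ℤ)) := ⟨_, rfl⟩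
    obtain ⟨z'', hz''j⟩ : ∃ z'' : Fin 3 → ℤ, ∀ j, z'' j = z' j - m2 * e j - m3 * f j :=
      ⟨_, fun _ => rfl⟩
    have hz'' : ∀ j, (z'' j : ℚ) = b0 * e j + g0 * f j := by
      intro j
      rw [hz''j j]
      push_cast
      rw [hzq j, hb0, hg0, Int.fract, Int.fract, ← hm2, ← hm3]
      ring
    have hb00 : 0 ≤ b0 := by rw [hb0]; exact Int.fract_nonneg _
    have hb01 : b0 < 1 := by rw [hb0]; exact Int.fract_lt_one _
    have hg00 : 0 ≤ g0 := by rw [hg0]; exact Int.fract_nonneg _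
    have hg01 : g0 < 1 := by rw [hg0]; exact Int.fract_lt_one _
    by_cases hb : b0 = 0
    · by_cases hg : g0 = 0
      · refine ⟨s - m3, m2, m3, fun j => ?_⟩
        have h4 : (z'' j : ℚ) = 0 := by rw [hz'' j, hb, hg]; ring
        have h5 : z'' j = 0 := by exact_mod_cast h4
        rw [hz''j j, hz'j j, hfj j] at h5
        linarith [h5]
      · exact (no_fract_multiple f hgf g0 (lt_of_le_of_ne hg00 (Ne.symm hg)) hg01 z''
          (fun j => by rw [hz'' j, hb]; ring)).elim
    · by_cases hg : g0 = 0
      · exact (no_fract_multiple e hge b0 (lt_of_le_of_ne hb00 (Ne.symm hb)) hb01 z''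
          (fun j => by rw [hz'' j, hg]; ring)).elim
      · exfalso
        have hb0' : 0 < b0 := lt_of_le_of_ne hb00 (Ne.symm hb)
        have hg0' : 0 < g0 := lt_of_le_of_ne hg00 (Ne.symm hg)
        have hnQ : (0 : ℚ) < (n : ℚ) + 1 := by positivity
        have hnQ1 : (1 : ℚ) ≤ (n : ℚ) := by exact_mod_cast hn
        have hnQne : ((n : ℚ) + 1) ≠ 0 := ne_of_gt hnQ
        obtain ⟨p, c', g', hc'0, hg'0, hlt, hpj⟩ :
            ∃ (p : Fin 3 → ℤ) (c' g' : ℚ), 0 < c' ∧ 0 < g' ∧ g' + c' < 1 ∧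
              ∀ j, (p j : ℚ) = ρu j + (c' * ((n : ℚ) + 1)) * e j + g' * f j := by
          have hdm : b0 / ((n : ℚ) + 1) * ((n : ℚ) + 1) = b0 := div_mul_cancel₀ _ hnQne
          have hdm' : (1 - b0) / ((n : ℚ) + 1) * ((n : ℚ) + 1) = 1 - b0 :=
            div_mul_cancel₀ _ hnQne
          by_cases hQlt : g0 + b0 / ((n : ℚ) + 1) < 1
          · refine ⟨fun j => ρu j + z'' j, b0 / ((n : ℚ) + 1), g0,
              div_pos hb0' hnQ, hg0', hQlt, fun j => ?_⟩
            rw [hdm]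
            push_cast
            rw [hz'' j]
            ring
          · refine ⟨fun j => ρu j + e j + f j - z'' j, (1 - b0) / ((n : ℚ) + 1), 1 - g0,
              div_pos (by linarith) hnQ, by linarith, ?_, fun j => ?_⟩
            · have hQge : 1 ≤ g0 + b0 / ((n : ℚ) + 1) := le_of_not_gt hQlt
              have h4 : 1 - g0 ≤ b0 / ((n : ℚ) + 1) := by linarith
              have h3 : (1 - g0) * ((n : ℚ) + 1) ≤ b0 := (le_div_iff₀ hnQ).mp h4
              have h5 : (1 - b0) / ((n : ℚ) + 1) < g0 := by
                rw [div_lt_iff₀ hnQ]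
                nlinarith [h3]
              linarith
            · rw [hdm']
              push_cast
              rw [hz'' j]
              ring
        apply ht.no_interior_point p
        refine ⟨(g' : ℝ), 1 - (g' : ℝ) - (c' : ℝ), (c' : ℝ),
          by exact_mod_cast hg'0, ?_, by exact_mod_cast hc'0, by ring, ?_⟩
        · have hltR : (g' : ℝ) + (c' : ℝ) < 1 := by exact_mod_cast hlt
          linarith
        · funext j
          simp only [Pi.add_apply, Pi.smul_apply, smul_eq_mul, toR3]
          have hQj : (p j : ℚ) = g' * (ρ₀ j : ℚ) + (1 - g' - c') * (ρu j : ℚ)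
              + c' * (ρv j : ℚ) := by
            have hev : (ρv j : ℚ) - (ρu j : ℚ) = ((n : ℚ) + 1) * (e j : ℚ) := by
              exact_mod_cast he j
            have hfq : ((f j : ℤ) : ℚ) = (ρ₀ j : ℚ) - (ρu j : ℚ) := by
              rw [hfj j]; push_cast; ring
            rw [hpj j, hfq]
            linear_combination (-c') * hev
          exact_mod_cast hQj
  obtain ⟨a₁, b₁, c₁, h₁⟩ := claim ![1, 0, 0]
  obtain ⟨a₂, b₂, c₂, h₂⟩ := claim ![0, 1, 0]
  obtain ⟨a₃, b₃, c₃, h₃⟩ := claim ![0, 0, 1]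
  have hrw1 : (![1, 0, 0] : Fin 3 → ℤ) = fun j => a₁ * ρu j + b₁ * e j + c₁ * ρ₀ j :=
    funext fun j => h₁ j
  have hrw2 : (![0, 1, 0] : Fin 3 → ℤ) = fun j => a₂ * ρu j + b₂ * e j + c₂ * ρ₀ j :=
    funext fun j => h₂ j
  have hrw3 : (![0, 0, 1] : Fin 3 → ℤ) = fun j => a₃ * ρu j + b₃ * e j + c₃ * ρ₀ j :=
    funext fun j => h₃ j
  have hone : det3 ![1, 0, 0] ![0, 1, 0] ![0, 0, 1] = 1 := by simp [det3]
  rw [hrw1, hrw2, hrw3, det3_combo] at hone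
  exact Int.isUnit_iff.mp (IsUnit.of_mul_eq_one (a := _)
    (a₁ * (b₂ * c₃ - c₂ * b₃) - b₁ * (a₂ * c₃ - c₂ * a₃) + c₁ * (a₂ * b₃ - b₂ * a₃))
    (by linear_combination hone))

theorem adjacent_An_triangles_pairing_symmetric
    (n : ℕ) (hn : 1 ≤ n) (ρ₀ ρ₁ ρu ρv : Fin 3 → ℤ)
    (h : AreAdjacentAnTriangles n ρ₀ ρ₁ ρu ρv)
    (w₀ w₁ : Fin 3 → ℤ)
    (hw₀ : w₀ ⬝ᵥ ρ₀ = 1 ∧ w₀ ⬝ᵥ ρu = 1 ∧ w₀ ⬝ᵥ ρv = 1)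
    (hw₁ : w₁ ⬝ᵥ ρ₁ = 1 ∧ w₁ ⬝ᵥ ρu = 1 ∧ w₁ ⬝ᵥ ρv = 1) :
    w₁ ⬝ᵥ ρ₀ = w₀ ⬝ᵥ ρ₁ := by
  obtain ⟨ht0, ht1, huv, φ, hφu, hφv, hφ0, hφ1⟩ := h
  obtain ⟨hw00, hw0u, hw0v⟩ := hw₀
  obtain ⟨hw11, hw1u, hw1v⟩ := hw₁
  simp only [dotProduct, Fin.sum_univ_three] at hw00 hw0u hw0v hw11 hw1u hw1v ⊢
  have hnZ : ((n : ℤ) + 1) ≠ 0 := by positivity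
  -- construct the primitive direction e of the common edge
  have hdvd : ∀ j : Fin 3, ((n : ℤ) + 1) ∣ (ρv j - ρu j) := by
    have hcast : (((n + 1 : ℕ) : ℤ)) = (n : ℤ) + 1 := by push_cast; ring
    have h0 : ((n : ℤ) + 1) ∣ (ρv 0 - ρu 0) := by
      rw [← hcast, ← huv]; exact Int.gcd_dvd_left _ _
    have hg12 : ((n : ℤ) + 1) ∣ ((Int.gcd (ρv 1 - ρu 1) (ρv 2 - ρu 2) : ℕ) : ℤ) := by
      rw [← hcast, ← huv]; exact Int.gcd_dvd_right _ _
    have h1 : ((n : ℤ) + 1) ∣ (ρv 1 - ρu 1) := dvd_trans hg12 (Int.gcd_dvd_left _ _)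
    have h2 : ((n : ℤ) + 1) ∣ (ρv 2 - ρu 2) := dvd_trans hg12 (Int.gcd_dvd_right _ _)
    intro j; fin_cases j
    · exact h0
    · exact h1
    · exact h2
  choose e he using hdvd
  have he' : ∀ j, ρv j - ρu j = ((n : ℤ) + 1) * e j := he
  have hge : Int.gcd (e 0) (Int.gcd (e 1) (e 2) : ℤ) = 1 := by
    have hnabs : ((n : ℤ) + 1).natAbs = n + 1 := by
      rw [show ((n : ℤ) + 1) = ((n + 1 : ℕ) : ℤ) by push_cast; ring, Int.natAbs_natCast]
    have h12 : Int.gcd (ρv 1 - ρu 1) (ρv 2 - ρu 2) = (n + 1) * Int.gcd (e 1) (e 2) := by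
      rw [he' 1, he' 2, Int.gcd_mul_left, hnabs]
    have h2 : latticeLength ρu ρv = (n + 1) * Int.gcd (e 0) (Int.gcd (e 1) (e 2) : ℤ) := by
      unfold latticeLength
      rw [he' 0, h12]
      rw [show (((n + 1) * Int.gcd (e 1) (e 2) : ℕ) : ℤ)
        = ((n : ℤ) + 1) * ((Int.gcd (e 1) (e 2) : ℕ) : ℤ) by push_cast; ring]
      rw [Int.gcd_mul_left, hnabs]
    rw [huv] at h2
    have hpos : 0 < n + 1 := Nat.succ_pos n
    nlinarith [h2, Nat.le_of_eq h2]
  -- the two key determinants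
  have hk0 := key_det n hn ρ₀ ρu ρv e ht0 huv he' hge
  have hk1 := key_det n hn ρ₁ ρu ρv e ht1 huv he' hge
  have hK0ne : det3 ρu e ρ₀ ≠ 0 := by rcases hk0 with h' | h' <;> omega
  -- φ vanishes on e
  have hφe : φ (toR3 e) = 0 := by
    have hev : toR3 ρv - toR3 ρu = ((n : ℝ) + 1) • toR3 e := by
      funext j
      simp only [Pi.sub_apply, Pi.smul_apply, smul_eq_mul, toR3]
      exact_mod_cast he' j
    have h' := congrArg φ hev
    rw [map_sub, _root_.map_smul, hφv, hφu, smul_eq_mul] at h'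
    have hnR : ((n : ℝ) + 1) ≠ 0 := by positivity
    have := h'.symm
    rw [sub_zero] at this  -- ((n:ℝ)+1) * φ e = 0
    rcases mul_eq_zero.mp this with h'' | h''
    · exact absurd h'' hnR
    · exact h''
  -- opposite signs: det3 ρu e ρ₁ = - det3 ρu e ρ₀
  have hsign : det3 ρu e ρ₁ = -det3 ρu e ρ₀ := by
    by_contra hcon
    have hEq : det3 ρu e ρ₁ = det3 ρu e ρ₀ := by
      rcases hk0 with h' | h' <;> rcases hk1 with h'' | h'' <;> omega
    obtain ⟨x, hx⟩ : ∃ x : Fin 3 → ℤ, ∀ j, x j = ρ₀ j - ρ₁ j := ⟨_, fun _ => rfl⟩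
    have hD3 : det3 ρu e x = 0 := by
      have hlin : det3 ρu e x = det3 ρu e ρ₀ - det3 ρu e ρ₁ := by
        simp only [det3, hx]; ring
      rw [hlin, hEq]; ring
    have hcr := fun j => cramer3 ρu e ρ₀ x j
    have hvec : (det3 ρu e ρ₀ : ℝ) • (toR3 ρ₀ - toR3 ρ₁)
        = (det3 x e ρ₀ : ℝ) • toR3 ρu + (det3 ρu x ρ₀ : ℝ) • toR3 e := by
      funext j
      simp only [Pi.sub_apply, Pi.add_apply, Pi.smul_apply, smul_eq_mul, toR3]
      have hZ : det3 ρu e ρ₀ * x j = det3 x e ρ₀ * ρu j + det3 ρu x ρ₀ * e j := by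
        linear_combination hcr j + ρ₀ j * hD3
      rw [hx j] at hZ
      exact_mod_cast congrArg (Int.cast : ℤ → ℝ) hZ
    have h' := congrArg φ hvec
    rw [_root_.map_smul, map_sub, map_add, _root_.map_smul, _root_.map_smul, hφu, hφe, smul_eq_mul, smul_eq_mul,
      smul_eq_mul] at h'
    have hKR : (det3 ρu e ρ₀ : ℝ) ≠ 0 := Int.cast_ne_zero.mpr hK0ne
    have hzero : φ (toR3 ρ₀) - φ (toR3 ρ₁) = 0 := by
      have : (det3 ρu e ρ₀ : ℝ) * (φ (toR3 ρ₀) - φ (toR3 ρ₁)) = 0 := by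
        rw [h']; ring
      rcases mul_eq_zero.mp this with h'' | h''
      · exact absurd h'' hKR
      · exact h''
    linarith
  -- w₀ and w₁ agree on e
  have hw0e : w₀ 0 * e 0 + w₀ 1 * e 1 + w₀ 2 * e 2 = 0 := by
    have hh : ((n : ℤ) + 1) * (w₀ 0 * e 0 + w₀ 1 * e 1 + w₀ 2 * e 2) = 0 := by
      linear_combination (-(w₀ 0)) * he' 0 - w₀ 1 * he' 1 - w₀ 2 * he' 2 + hw0v - hw0u
    exact (mul_eq_zero.mp hh).resolve_left hnZ
  have hw1e : w₁ 0 * e 0 + w₁ 1 * e 1 + w₁ 2 * e 2 = 0 := by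
    have hh : ((n : ℤ) + 1) * (w₁ 0 * e 0 + w₁ 1 * e 1 + w₁ 2 * e 2) = 0 := by
      linear_combination (-(w₁ 0)) * he' 0 - w₁ 1 * he' 1 - w₁ 2 * he' 2 + hw1v - hw1u
    exact (mul_eq_zero.mp hh).resolve_left hnZ
  -- the sum ρ₀ + ρ₁ lies in the span of ρu and e
  obtain ⟨y, hy⟩ : ∃ y : Fin 3 → ℤ, ∀ j, y j = ρ₀ j + ρ₁ j := ⟨_, fun _ => rfl⟩
  have hD3y : det3 ρu e y = 0 := by
    have hlin : det3 ρu e y = det3 ρu e ρ₀ + det3 ρu e ρ₁ := by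
      simp only [det3, hy]; ring
    rw [hlin, hsign]; ring
  have hcry := fun j => cramer3 ρu e ρ₀ y j
  have hS : (w₀ 0 - w₁ 0) * y 0 + (w₀ 1 - w₁ 1) * y 1 + (w₀ 2 - w₁ 2) * y 2 = 0 := by
    have hh : det3 ρu e ρ₀ * ((w₀ 0 - w₁ 0) * y 0 + (w₀ 1 - w₁ 1) * y 1
        + (w₀ 2 - w₁ 2) * y 2) = 0 := by
      linear_combination (w₀ 0 - w₁ 0) * hcry 0 + (w₀ 1 - w₁ 1) * hcry 1
        + (w₀ 2 - w₁ 2) * hcry 2 + det3 y e ρ₀ * (hw0u - hw1u)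
        + det3 ρu y ρ₀ * (hw0e - hw1e)
        + ((w₀ 0 - w₁ 0) * ρ₀ 0 + (w₀ 1 - w₁ 1) * ρ₀ 1 + (w₀ 2 - w₁ 2) * ρ₀ 2) * hD3y
    exact (mul_eq_zero.mp hh).resolve_left hK0ne
  simp only [hy] at hS
  linear_combination -hS + hw00 - hw11
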